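/- Let I ⊆ {1, …, N} with |I| = N − r be such that the vectors a_i for i ∉ I are linearly independent over ℝ. Let γ ∈ ℂ^N with γ_i ∈ ℤ for all i ∈ I, and let ρ ∈ ℝ^N satisfy ∑_{j=1}^N ρ_j l_j > 0 for every nonzero l ∈ L with l_i ≥ 0 for all i ∈ I. Then there exists t₀ > 0 such that for every real t with 0 < t < t₀, the family indexed by l ∈ L with terms ∏_{j=1}^N t^{ρ_j l_j} · |Γ(l_j + γ_j + 1)⁻¹| is summable, where Γ denotes the complex Gamma function with the convention that Γ(z)⁻¹ = 0 when z is a pole of Γ (i.e. z ∈ {0, −1, −2, …}). -/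

import Mathlib

open scoped BigOperators

namespace Stmt4Aux
open Finset


lemma choose_le_two_pow (n k : ℕ) : n.choose k ≤ 2 ^ n := by
  rcases le_or_gt k n with hk | hk
  · calc n.choose k ≤ ∑ m ∈ range (n+1), n.choose m :=
        Finset.single_le_sum (f := fun m => n.choose m) (fun _ _ => Nat.zero_le _)
          (by simp [Nat.lt_succ_of_le hk])
    _ = 2 ^ n := Nat.sum_range_choose n
  · simp [Nat.choose_eq_zero_of_lt hk]

lemma add_factorial_le (a b : ℕ) : (a + b).factorial ≤ 2 ^ (a+b) * (a.factorial * b.factorial) := by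
  have h := Nat.choose_mul_factorial_mul_factorial (Nat.le_add_right a b)
  simp only [Nat.add_sub_cancel_left] at h
  calc (a+b).factorial = (a+b).choose a * a.factorial * b.factorial := h.symm
  _ ≤ 2 ^ (a+b) * a.factorial * b.factorial := by
      gcongr; exact choose_le_two_pow _ _
  _ = 2 ^ (a+b) * (a.factorial * b.factorial) := by ring

lemma factorial_sum_le {ι : Type*} [DecidableEq ι] (s : Finset ι) (f : ι → ℕ) :
    (∑ i ∈ s, f i).factorial ≤ 2 ^ (s.card * ∑ i ∈ s, f i) * ∏ i ∈ s, (f i).factorial := by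
  induction s using Finset.induction_on with
  | empty => simp
  | insert a s ha ih =>
    rw [Finset.sum_insert ha, Finset.prod_insert ha, Finset.card_insert_of_notMem ha]
    set S := ∑ i ∈ s, f i with hS
    calc (f a + S).factorial ≤ 2 ^ (f a + S) * ((f a).factorial * S.factorial) :=
        add_factorial_le _ _
    _ ≤ 2 ^ (f a + S) * ((f a).factorial * (2 ^ (s.card * S) * ∏ i ∈ s, (f i).factorial)) := by
        gcongr
    _ = 2 ^ ((f a + S) + s.card * S) * ((f a).factorial * ∏ i ∈ s, (f i).factorial) := by
        rw [pow_add]; ring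
    _ ≤ 2 ^ ((s.card + 1) * (f a + S)) * ((f a).factorial * ∏ i ∈ s, (f i).factorial) := by
        gcongr 2 ^ ?_ * _
        · exact one_le_two
        · nlinarith [Nat.zero_le (s.card * f a)]

lemma prod_range_sub_nat (m : ℕ) : ∏ k ∈ range m, (m - k) = m.factorial := by
  have := Finset.prod_range_reflect (fun k => k + 1) m
  rw [← Finset.prod_range_add_one_eq_factorial, ← this]
  apply Finset.prod_congr rfl
  intro j hj
  rw [Finset.mem_range] at hj
  omega

lemma prod_range_sub_real (m : ℕ) : ∏ k ∈ range m, ((m:ℝ) - k) = m.factorial := by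
  rw [← prod_range_sub_nat m, Nat.cast_prod]
  apply Finset.prod_congr rfl
  intro j hj
  rw [Finset.mem_range] at hj
  have : (j:ℝ) ≤ m := by exact_mod_cast hj.le
  rw [Nat.cast_sub hj.le]



lemma Gamma_add_nat (w : ℂ) (n : ℕ) (hw : ∀ k < n, w + k ≠ 0) :
    Complex.Gamma (w + n) = Complex.Gamma w * ∏ k ∈ range n, (w + k) := by
  induction n with
  | zero => simp
  | succ n ih =>
    have h1 : w + ((n+1 : ℕ) : ℂ) = (w + n) + 1 := by push_cast; ring
    rw [h1, Complex.Gamma_add_one _ (hw n (Nat.lt_succ_self n)),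
      ih (fun k hk => hw k (hk.trans (Nat.lt_succ_self n))), Finset.prod_range_succ]
    ring

lemma exists_mu (w : ℂ) (hw : ∀ k : ℕ, w + k ≠ 0) :
    ∃ μ : ℝ, 0 < μ ∧ ∀ k : ℕ, μ * (k + 1) ≤ ‖w + k‖ := by
  set K : ℕ := ⌈2 * ‖w‖⌉₊ + 1 with hK
  have hne : (Finset.range K).Nonempty := ⟨0, by simp [hK]⟩
  set μ : ℝ := min (1/2) ((Finset.range K).inf' hne fun k => ‖w + k‖ / (k + 1)) with hμ
  refine ⟨μ, ?_, ?_⟩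
  · apply lt_min (by norm_num)
    rw [Finset.lt_inf'_iff]
    intro k _
    apply div_pos (norm_pos_iff.2 (hw k))
    positivity
  · intro k
    rcases lt_or_ge k K with hk | hk
    · have h1 : μ ≤ ‖w + k‖ / (k + 1) :=
        (min_le_right _ _).trans (Finset.inf'_le _ (Finset.mem_range.2 hk))
      rw [div_eq_mul_inv] at h1
      have hk1 : (0:ℝ) < (k:ℝ) + 1 := by positivity
      calc μ * ((k:ℝ) + 1) ≤ (‖w + k‖ * ((k:ℝ)+1)⁻¹) * ((k:ℝ)+1) := by gcongr
      _ = ‖w + k‖ := by field_simp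
    · have hk2 : 2 * ‖w‖ + 1 ≤ (k:ℝ) := by
        have : (K:ℝ) ≤ k := by exact_mod_cast hk
        have h2 : 2 * ‖w‖ ≤ (⌈2 * ‖w‖⌉₊ : ℝ) := Nat.le_ceil _
        have h3 : ((⌈2 * ‖w‖⌉₊ : ℕ) : ℝ) + 1 = (K:ℝ) := by rw [hK]; push_cast; ring
        linarith
      have hnorm : (k:ℝ) - ‖w‖ ≤ ‖w + k‖ := by
        have h4 : ‖(k:ℂ)‖ ≤ ‖w + k‖ + ‖w‖ := by
          calc ‖(k:ℂ)‖ = ‖(w + k) + (-w)‖ := by ring_nf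
          _ ≤ ‖w + k‖ + ‖-w‖ := norm_add_le _ _
          _ = ‖w + k‖ + ‖w‖ := by rw [norm_neg]
        have h5 : ‖(k:ℂ)‖ = (k:ℝ) := by
          rw [Complex.norm_natCast]
        linarith
      have hμle : μ ≤ 1/2 := min_le_left _ _
      have : μ * ((k:ℝ) + 1) ≤ (1/2) * ((k:ℝ)+1) := by
        apply mul_le_mul_of_nonneg_right hμle (by positivity)
      linarith



lemma gamma_inv_bound (w : ℂ) :
    ∃ C : ℝ, 1 ≤ C ∧ ∀ n : ℤ,
      ‖(Complex.Gamma ((n:ℂ) + w))⁻¹‖ ≤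
        C ^ (n.natAbs + 1) * ((-n).toNat.factorial : ℝ) / (n.toNat.factorial : ℝ) := by
  by_cases hw : ∀ k : ℕ, w + k ≠ 0
  · obtain ⟨μ, hμ, hμle⟩ := exists_mu w hw
    have hΓw : Complex.Gamma w ≠ 0 := by
      intro h
      obtain ⟨m, hm⟩ := (Complex.Gamma_eq_zero_iff w).1 h
      exact hw m (by rw [hm]; ring)
    set C : ℝ := max 1 (max ‖(Complex.Gamma w)⁻¹‖ (max μ⁻¹ (1 + ‖w‖))) with hC
    have hC1 : (1:ℝ) ≤ C := le_max_left _ _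
    have hC0 : (0:ℝ) ≤ C := zero_le_one.trans hC1
    have hCΓ : ‖(Complex.Gamma w)⁻¹‖ ≤ C := le_trans (le_max_left _ _) (le_max_right _ _)
    have hCμ : μ⁻¹ ≤ C :=
      le_trans (le_trans (le_max_left _ _) (le_max_right _ _)) (le_max_right _ _)
    have hCw : 1 + ‖w‖ ≤ C :=
      le_trans (le_trans (le_max_right _ _) (le_max_right _ _)) (le_max_right _ _)
    refine ⟨C, hC1, fun n => ?_⟩
    by_cases hz : Complex.Gamma ((n:ℂ) + w) = 0
    · rw [hz]
      simp only [inv_zero, norm_zero]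
      positivity
    rcases le_or_gt 0 n with hn | hn
    · -- nonnegative case
      set m := n.toNat with hm
      have hnm : ((n:ℤ):ℂ) = (m:ℂ) := by
        rw [← Int.toNat_of_nonneg hn]; push_cast; rfl
      have hfz : ∀ k ∈ range m, w + (k:ℂ) ≠ 0 := fun k _ => hw k
      have key : Complex.Gamma (w + m) = Complex.Gamma w * ∏ k ∈ range m, (w + k) :=
        Gamma_add_nat w m (fun k _ => hw k)
      have harg : (n:ℂ) + w = w + m := by rw [hnm]; ring
      have hnorm : ‖(Complex.Gamma ((n:ℂ) + w))⁻¹‖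
          = ‖(Complex.Gamma w)⁻¹‖ * ∏ k ∈ range m, ‖w + (k:ℂ)‖⁻¹ := by
        rw [harg, key, mul_inv, norm_mul, norm_inv (∏ k ∈ range m, (w + (k:ℂ))), norm_prod,
          ← Finset.prod_inv_distrib]
      rw [hnorm]
      have hprodle : ∏ k ∈ range m, ‖w + (k:ℂ)‖⁻¹ ≤ ∏ k ∈ range m, (μ⁻¹ * ((k:ℝ)+1)⁻¹) := by
        apply Finset.prod_le_prod
        · intro k _; positivity
        · intro k _
          rw [← mul_inv]
          apply inv_anti₀ (by positivity) (hμle k)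
      have hprodeq : ∏ k ∈ range m, (μ⁻¹ * ((k:ℝ)+1)⁻¹)
          = μ⁻¹ ^ m * ((m.factorial : ℝ))⁻¹ := by
        rw [Finset.prod_mul_distrib, Finset.prod_const, Finset.card_range,
          Finset.prod_inv_distrib]
        congr 2
        rw [← Finset.prod_range_add_one_eq_factorial m]
        push_cast
        rfl
      have hfinal : ‖(Complex.Gamma w)⁻¹‖ * (μ⁻¹ ^ m * ((m.factorial : ℝ))⁻¹)
          ≤ C ^ (m + 1) * ((m.factorial : ℝ))⁻¹ := by
        have : ‖(Complex.Gamma w)⁻¹‖ * μ⁻¹ ^ m ≤ C * C ^ m := by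
          apply mul_le_mul hCΓ (pow_le_pow_left₀ (by positivity) hCμ m) (by positivity) hC0
        calc ‖(Complex.Gamma w)⁻¹‖ * (μ⁻¹ ^ m * ((m.factorial : ℝ))⁻¹)
            = (‖(Complex.Gamma w)⁻¹‖ * μ⁻¹ ^ m) * ((m.factorial : ℝ))⁻¹ := by ring
        _ ≤ (C * C ^ m) * ((m.factorial : ℝ))⁻¹ := by gcongr
        _ = C ^ (m + 1) * ((m.factorial : ℝ))⁻¹ := by rw [pow_succ]; ring
      have hnabs : n.natAbs = m := by omega
      have hneg : (-n).toNat = 0 := by omega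
      rw [hnabs, hneg]
      simp only [Nat.factorial_zero, Nat.cast_one, mul_one]
      rw [div_eq_mul_inv]
      calc ‖(Complex.Gamma w)⁻¹‖ * ∏ k ∈ range m, ‖w + (k:ℂ)‖⁻¹
          ≤ ‖(Complex.Gamma w)⁻¹‖ * (μ⁻¹ ^ m * ((m.factorial : ℝ))⁻¹) := by
            rw [← hprodeq]; gcongr
      _ ≤ C ^ (m + 1) * ((m.factorial : ℝ))⁻¹ := hfinal
    · -- negative case
      set m := (-n).toNat with hm
      have hm1 : 1 ≤ m := by omega
      have hnm : ((n:ℤ):ℂ) = -(m:ℂ) := by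
        have : ((-n).toNat : ℤ) = -n := Int.toNat_of_nonneg (by omega)
        have h2 : (n : ℤ) = -(m : ℤ) := by omega
        rw [h2]; push_cast; ring
      have harg : (n:ℂ) + w = (w - m) := by rw [hnm]; ring
      have hch : ∀ k < m, (w - m) + (k:ℂ) ≠ 0 := by
        intro k hk h0
        apply hz
        rw [harg]
        have hwk : w - (m:ℂ) = -(k:ℂ) := by linear_combination h0
        rw [hwk]
        exact (Complex.Gamma_eq_zero_iff _).2 ⟨k, rfl⟩
      have key : Complex.Gamma ((w - m) + m) =
          Complex.Gamma (w - m) * ∏ k ∈ range m, ((w - m) + k) := Gamma_add_nat (w - m) m hch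
      have hwm : (w - (m:ℂ)) + (m:ℂ) = w := by ring
      rw [hwm] at key
      have hQ : (∏ k ∈ range m, ((w - (m:ℂ)) + k)) ≠ 0 :=
        Finset.prod_ne_zero_iff.2 (fun k hk => hch k (Finset.mem_range.1 hk))
      have hGwm : Complex.Gamma (w - (m:ℂ)) ≠ 0 := by rw [← harg]; exact hz
      have hinv : (Complex.Gamma (w - m))⁻¹
          = (∏ k ∈ range m, ((w - (m:ℂ)) + k)) * (Complex.Gamma w)⁻¹ := by
        rw [key, mul_inv, mul_comm (Complex.Gamma (w - (m:ℂ)))⁻¹ _, ← mul_assoc,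
          mul_inv_cancel₀ hQ, one_mul]
      have hQbound : ‖∏ k ∈ range m, ((w - (m:ℂ)) + k)‖ ≤ (1 + ‖w‖) ^ m * m.factorial := by
        rw [norm_prod]
        calc ∏ k ∈ range m, ‖(w - (m:ℂ)) + k‖
            ≤ ∏ k ∈ range m, ((1 + ‖w‖) * ((m:ℝ) - k)) := by
              apply Finset.prod_le_prod (fun k _ => norm_nonneg _)
              intro k hk
              have hkm : k < m := Finset.mem_range.1 hk
              have h1 : ‖(w - (m:ℂ)) + k‖ ≤ ‖w‖ + ((m:ℝ) - k) := by
                have : (w - (m:ℂ)) + k = w + (((k:ℝ) - (m:ℝ) : ℝ) : ℂ) := by push_cast; ring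
                rw [this]
                refine (norm_add_le _ _).trans ?_
                have : ‖(((k:ℝ) - (m:ℝ) : ℝ) : ℂ)‖ = |(k:ℝ) - (m:ℝ)| := Complex.norm_real _
                rw [this, abs_sub_comm, abs_of_nonneg (by
                  have : (k:ℝ) ≤ m := by exact_mod_cast hkm.le
                  linarith)]
              have h2 : (1:ℝ) ≤ (m:ℝ) - k := by
                have : (k:ℝ) + 1 ≤ m := by exact_mod_cast hkm
                linarith
              nlinarith [norm_nonneg w]
        _ = (1 + ‖w‖) ^ m * m.factorial := by
              rw [Finset.prod_mul_distrib, Finset.prod_const, Finset.card_range,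
                prod_range_sub_real]
      have hnabs : n.natAbs = m := by omega
      have hneg0 : n.toNat = 0 := by omega
      rw [harg, hinv, hnabs, hneg0]
      simp only [Nat.factorial_zero, Nat.cast_one, div_one]
      calc ‖(∏ k ∈ range m, ((w - (m:ℂ)) + k)) * (Complex.Gamma w)⁻¹‖
          = ‖∏ k ∈ range m, ((w - (m:ℂ)) + k)‖ * ‖(Complex.Gamma w)⁻¹‖ := norm_mul _ _
      _ ≤ ((1 + ‖w‖) ^ m * m.factorial) * C := by
            apply mul_le_mul hQbound hCΓ (norm_nonneg _) (by positivity)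
      _ ≤ (C ^ m * m.factorial) * C := by gcongr
      _ = C ^ (m + 1) * m.factorial := by rw [pow_succ]; ring
  · push_neg at hw
    obtain ⟨k₀, hk₀⟩ := hw
    set s : ℕ := k₀ + 1 with hs
    set C : ℝ := ((2 * s.factorial : ℕ) : ℝ) with hCdef
    have hC1 : (1:ℝ) ≤ C := by
      rw [hCdef]
      exact_mod_cast Nat.one_le_iff_ne_zero.2 (by positivity)
    refine ⟨C, hC1, fun n => ?_⟩
    by_cases hz : Complex.Gamma ((n:ℂ) + w) = 0
    · rw [hz]
      simp only [inv_zero, norm_zero]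
      positivity
    have hwk : w = -(k₀:ℂ) := by linear_combination hk₀
    have harg : (n:ℂ) + w = ((n - k₀ : ℤ) : ℂ) := by rw [hwk]; push_cast; ring
    have hpos : (1:ℤ) ≤ n - k₀ := by
      by_contra hcon
      push_neg at hcon
      apply hz
      rw [harg]
      refine (Complex.Gamma_eq_zero_iff _).2 ⟨(k₀ - n).toNat, ?_⟩
      have h5 : (n - (k₀:ℤ)) = -(((k₀ - n).toNat : ℕ) : ℤ) := by omega
      rw [h5]
      push_cast
      ring
    set m : ℕ := n.toNat with hmdef
    have hms : s ≤ m := by omega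
    have hnm : (n : ℤ) = (m : ℤ) := by omega
    have hargm : (n:ℂ) + w = ((m - s : ℕ) : ℂ) + 1 := by
      rw [harg]
      have : (n - k₀ : ℤ) = ((m - s : ℕ) : ℤ) + 1 := by omega
      rw [this]
      push_cast
      ring
    have hgamma : Complex.Gamma ((n:ℂ) + w) = ((m - s).factorial : ℂ) := by
      rw [hargm]
      exact Complex.Gamma_nat_eq_factorial _
    rw [hgamma]
    have hnabs : n.natAbs = m := by omega
    have hneg : (-n).toNat = 0 := by omega
    rw [hnabs, hneg]
    simp only [Nat.factorial_zero, Nat.cast_one, mul_one]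
    rw [norm_inv, Complex.norm_natCast]
    -- key nat inequality : m! ≤ (2*s!)^(m+1) * (m-s)!
    have hnat : m.factorial ≤ (2 * s.factorial) ^ (m + 1) * (m - s).factorial := by
      have h1 : m.factorial = m.choose s * s.factorial * (m - s).factorial :=
        (Nat.choose_mul_factorial_mul_factorial hms).symm
      have h2 : m.choose s ≤ 2 ^ m := choose_le_two_pow m s
      calc m.factorial = m.choose s * s.factorial * (m - s).factorial := h1
      _ ≤ 2 ^ m * s.factorial * (m - s).factorial := by gcongr
      _ ≤ (2 * s.factorial) ^ (m + 1) * (m - s).factorial := by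
          gcongr ?_ * _
          rw [mul_pow]
          have : s.factorial ≤ s.factorial ^ (m+1) :=
            Nat.le_self_pow (Nat.succ_ne_zero m) _
          calc 2 ^ m * s.factorial ≤ 2 ^ (m+1) * s.factorial ^ (m+1) := by
                gcongr <;> omega
          _ = _ := rfl
    have hfac0 : (0:ℝ) < ((m - s).factorial : ℝ) := by exact_mod_cast (m-s).factorial_pos
    have hfacm : (0:ℝ) < (m.factorial : ℝ) := by exact_mod_cast m.factorial_pos
    have hcast : (m.factorial : ℝ) ≤ C ^ (m + 1) * ((m - s).factorial : ℝ) := by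
      rw [hCdef]
      exact_mod_cast hnat
    rw [le_div_iff₀ hfacm, inv_mul_le_iff₀ hfac0]
    calc (m.factorial : ℝ) ≤ C ^ (m + 1) * ((m - s).factorial : ℝ) := hcast
    _ = ((m - s).factorial : ℝ) * C ^ (m + 1) := mul_comm _ _



lemma summable_pi_geom_fin : ∀ (n : ℕ) (q : Fin n → ℝ), (∀ i, 0 ≤ q i) → (∀ i, q i < 1) →
    Summable (fun m : Fin n → ℕ => ∏ i, q i ^ m i) := by
  intro n
  induction n with
  | zero => intro q _ _; exact Summable.of_finite
  | succ n ih =>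
    intro q hq0 hq1
    have hgeo : Summable (fun k : ℕ => q 0 ^ k) := summable_geometric_of_lt_one (hq0 0) (hq1 0)
    have hrest := ih (fun i => q i.succ) (fun i => hq0 _) (fun i => hq1 _)
    have hmul := hgeo.mul_of_nonneg hrest (fun k => pow_nonneg (hq0 0) _)
      (fun m => Finset.prod_nonneg fun i _ => pow_nonneg (hq0 _) _)
    have heq : (fun m : Fin (n+1) → ℕ => ∏ i, q i ^ m i)
        = (fun p : ℕ × (Fin n → ℕ) => q 0 ^ p.1 * ∏ i, q i.succ ^ p.2 i)
          ∘ (Fin.consEquiv fun _ => ℕ).symm := by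
      funext m
      show _ = q 0 ^ (m 0) * ∏ i : Fin n, q i.succ ^ (m i.succ)
      rw [Fin.prod_univ_succ]
    rw [heq]
    exact ((Fin.consEquiv fun _ => ℕ).symm.summable_iff).2 hmul

lemma summable_pi_geom {κ : Type*} [Fintype κ] (q : κ → ℝ) (hq0 : ∀ i, 0 ≤ q i)
    (hq1 : ∀ i, q i < 1) : Summable (fun m : κ → ℕ => ∏ i, q i ^ m i) := by
  let e := Fintype.equivFin κ
  have hfin := summable_pi_geom_fin (Fintype.card κ) (fun j => q (e.symm j))
    (fun j => hq0 _) (fun j => hq1 _)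
  let E : (κ → ℕ) ≃ (Fin (Fintype.card κ) → ℕ) := e.arrowCongr (Equiv.refl ℕ)
  have heq : (fun m : κ → ℕ => ∏ i, q i ^ m i)
      = (fun m' : Fin (Fintype.card κ) → ℕ => ∏ j, (q (e.symm j)) ^ m' j) ∘ E := by
    funext m
    simp only [Function.comp_apply]
    rw [← Equiv.prod_comp e.symm (fun i => q i ^ m i)]
    rfl
  rw [heq]
  exact E.summable_iff.2 hfin

lemma rat_indep {r : ℕ} {ι : Type*} [Fintype ι] (v : ι → Fin r → ℤ)
    (hR : LinearIndependent ℝ (fun i => fun k => ((v i k : ℝ)))) :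
    LinearIndependent ℚ (fun i => fun k => ((v i k : ℚ))) := by
  rw [Fintype.linearIndependent_iff] at hR ⊢
  intro g hg i
  have hcomp : ∀ k, ∑ j, g j * (v j k : ℚ) = 0 := by
    intro k
    have := congrFun hg k
    simpa [Finset.sum_apply] using this
  have hreal : ∑ j, (fun j => ((g j : ℝ))) j • (fun k => ((v j k : ℝ))) = 0 := by
    funext k
    simp only [Finset.sum_apply, Pi.smul_apply, smul_eq_mul, Pi.zero_apply]
    exact_mod_cast congrArg (fun q : ℚ => (q : ℝ)) (hcomp k)
  exact_mod_cast hR (fun j => (g j : ℝ)) hreal i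

lemma fact_ratio {N : ℕ} (l : Fin N → ℤ) (hsum : ∑ j, l j = 0) :
    (∏ j, (((-l j).toNat.factorial : ℕ) : ℝ))
      ≤ 2 ^ (N * ∑ j, (l j).natAbs) * ∏ j, (((l j).toNat.factorial : ℕ) : ℝ) := by
  have hP : ∑ j, (-l j).toNat = ∑ j, (l j).toNat := by
    have h1 : ∀ j, ((-l j).toNat : ℤ) = ((l j).toNat : ℤ) - l j := fun j => by omega
    have h2 : (∑ j, ((-l j).toNat : ℤ)) = ∑ j, (((l j).toNat : ℤ) - l j) :=
      Finset.sum_congr rfl (fun j _ => h1 j)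
    rw [Finset.sum_sub_distrib, hsum, sub_zero] at h2
    exact_mod_cast h2
  have hnat : (∏ j, (-l j).toNat.factorial)
      ≤ 2 ^ (N * ∑ j, (l j).natAbs) * ∏ j, (l j).toNat.factorial := by
    calc ∏ j, (-l j).toNat.factorial ≤ (∑ j, (-l j).toNat).factorial :=
        Nat.le_of_dvd (Nat.factorial_pos _) (Nat.prod_factorial_dvd_factorial_sum _ _)
    _ = (∑ j, (l j).toNat).factorial := by rw [hP]
    _ ≤ 2 ^ (Finset.univ.card * ∑ j, (l j).toNat) * ∏ j, (l j).toNat.factorial :=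
        factorial_sum_le Finset.univ _
    _ ≤ 2 ^ (N * ∑ j, (l j).natAbs) * ∏ j, (l j).toNat.factorial := by
        gcongr 2 ^ ?_ * _
        · exact one_le_two
        · have h3 : (Finset.univ : Finset (Fin N)).card = N := by simp
          have h4 : ∑ j, (l j).toNat ≤ ∑ j, (l j).natAbs :=
            Finset.sum_le_sum (fun j _ => by omega)
          rw [h3]
          exact Nat.mul_le_mul_left _ h4
  exact_mod_cast hnat


end Stmt4Aux

/-- The lattice of integer relations among the vectors `a j`. -/
def latticeL {r N : ℕ} (a : Fin N → Fin r → ℤ) : Set (Fin N → ℤ) :=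
  {l | ∑ j, l j • a j = 0}

set_option maxHeartbeats 1000000 in
/-- For a convergence direction `ρ`, the series `∑_{l ∈ L} ∏_j t^{ρ_j l_j} |Γ(l_j+γ_j+1)⁻¹|`
is summable for all sufficiently small `t > 0`.  (Mathlib's `Complex.Gamma` vanishes at the
poles `0, -1, -2, …`, and `(0 : ℂ)⁻¹ = 0`, so `Γ(z)⁻¹ = 0` at the poles, as required.) -/
theorem stmt_4 (r N : ℕ) (hr : 1 ≤ r) (hrN : r < N)
    (a : Fin N → Fin r → ℤ)
    (hspan : Submodule.span ℤ (Set.range a) = ⊤)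
    (h : (Fin r → ℤ) →ₗ[ℤ] ℤ) (hh : ∀ j, h (a j) = 1)
    (I : Finset (Fin N)) (hI : I.card = N - r)
    (hind : LinearIndependent ℝ (fun i : {i : Fin N // i ∉ I} => fun k => (a i.1 k : ℝ)))
    (γ : Fin N → ℂ) (hγ : ∀ i ∈ I, ∃ z : ℤ, γ i = (z : ℂ))
    (ρ : Fin N → ℝ)
    (hρ : ∀ l ∈ latticeL a, l ≠ 0 → (∀ i ∈ I, 0 ≤ l i) → 0 < ∑ j, ρ j * (l j : ℝ)) :
    ∃ t₀ : ℝ, 0 < t₀ ∧ ∀ t : ℝ, 0 < t → t < t₀ →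
      Summable (fun l : latticeL a =>
        ∏ j, t ^ (ρ j * ((l : Fin N → ℤ) j : ℝ)) *
          ‖(Complex.Gamma (((l : Fin N → ℤ) j : ℂ) + γ j + 1))⁻¹‖) := by
  classical
  have hN0 : 0 < N := lt_of_le_of_lt (Nat.zero_le r) hrN
  haveI : NeZero N := ⟨hN0.ne'⟩
  -- integer values of γ on I
  choose c hc using fun i : {i : Fin N // i ∈ I} => hγ i.1 i.2
  -- independence over ℚ
  have hindQ : LinearIndependent ℚ
      (fun i : {i : Fin N // i ∉ I} => fun k => ((a i.1 k : ℚ))) :=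
    Stmt4Aux.rat_indep (fun i : {i : Fin N // i ∉ I} => a i.1) hind
  have hcardc : Fintype.card {i : Fin N // i ∉ I} = r := by
    have h2 := Fintype.card_subtype_compl (fun i : Fin N => i ∈ I)
    have h1 : Fintype.card {i : Fin N // i ∈ I} = I.card := Fintype.card_coe I
    rw [h1, Fintype.card_fin, hI] at h2
    rw [h2]
    omega
  haveI hnec : Nonempty {i : Fin N // i ∉ I} := by
    rw [← Fintype.card_pos_iff, hcardc]
    omega
  haveI hneI : Nonempty {i : Fin N // i ∈ I} := by
    have hcard : 0 < I.card := by omega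
    obtain ⟨i0, hi0⟩ := Finset.card_pos.1 hcard
    exact ⟨⟨i0, hi0⟩⟩
  have hspanQ : Submodule.span ℚ (Set.range
      (fun i : {i : Fin N // i ∉ I} => fun k => ((a i.1 k : ℚ)))) = ⊤ := by
    apply hindQ.span_eq_top_of_card_eq_finrank
    rw [hcardc, Module.finrank_fintype_fun_eq_card, Fintype.card_fin]
  -- construction of the vectors v i
  have hv : ∀ i : {i : Fin N // i ∈ I}, ∃ v : Fin N → ℚ,
      (∀ k, ∑ j, v j * (a j k : ℚ) = 0) ∧ v i.1 = 1 ∧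
      ∀ i' : {i : Fin N // i ∈ I}, i' ≠ i → v i'.1 = 0 := by
    intro i
    have hmem : (fun k => ((a i.1 k : ℚ))) ∈ Submodule.span ℚ (Set.range
        (fun i : {i : Fin N // i ∉ I} => fun k => ((a i.1 k : ℚ)))) := by
      rw [hspanQ]; trivial
    obtain ⟨cf, hcf⟩ := (Submodule.mem_span_range_iff_exists_fun ℚ).1 hmem
    refine ⟨fun j => if hj : j ∈ I then (if j = i.1 then 1 else 0) else -cf ⟨j, hj⟩, ?_, ?_, ?_⟩
    · intro k
      have hcfk : ∑ j : {j : Fin N // j ∉ I}, cf j * (a j.1 k : ℚ) = (a i.1 k : ℚ) := by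
        have := congrFun hcf k
        simpa [Finset.sum_apply] using this
      have hIsum : ∑ j ∈ I, (if hj : j ∈ I then (if j = i.1 then (1:ℚ) else 0)
          else -cf ⟨j, hj⟩) * (a j k : ℚ) = (a i.1 k : ℚ) := by
        rw [Finset.sum_eq_single_of_mem i.1 i.2]
        · simp [i.2]
        · intro b hb hbne
          simp [hb, hbne]
      have hCsum : ∑ j ∈ Iᶜ, (if hj : j ∈ I then (if j = i.1 then (1:ℚ) else 0)
          else -cf ⟨j, hj⟩) * (a j k : ℚ) = -(a i.1 k : ℚ) := by
        rw [Finset.sum_subtype Iᶜ (fun x => Finset.mem_compl) (fun j =>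
          (if hj : j ∈ I then (if j = i.1 then (1:ℚ) else 0) else -cf ⟨j, hj⟩) * (a j k : ℚ))]
        rw [← hcfk, ← Finset.sum_neg_distrib]
        apply Finset.sum_congr rfl
        intro j _
        rw [dif_neg j.2]
        ring
      have hsplit := Finset.sum_add_sum_compl I (fun j =>
        (if hj : j ∈ I then (if j = i.1 then (1:ℚ) else 0) else -cf ⟨j, hj⟩) * (a j k : ℚ))
      rw [hIsum, hCsum] at hsplit
      rw [← hsplit]
      ring
    · simp [i.2]
    · intro i' hne'
      have hi' : i'.1 ∈ I := i'.2
      have hne'' : i'.1 ≠ i.1 := fun hcon => hne' (Subtype.ext hcon)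
      simp [hi', hne'']
  choose v hvrel hvone hvzero using hv
  -- representation of relations
  have hrep : ∀ l : Fin N → ℚ, (∀ k, ∑ j, l j * (a j k : ℚ) = 0) →
      ∀ j, l j = ∑ i : {i : Fin N // i ∈ I}, l i.1 * v i j := by
    intro l hl
    set d : Fin N → ℚ := fun j => l j - ∑ i : {i : Fin N // i ∈ I}, l i.1 * v i j with hd
    have hdI : ∀ i' : {i : Fin N // i ∈ I}, d i'.1 = 0 := by
      intro i'
      have hsum : ∑ i : {i : Fin N // i ∈ I}, l i.1 * v i i'.1 = l i'.1 := by
        rw [Finset.sum_eq_single i']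
        · rw [hvone i', mul_one]
        · intro b _ hbne
          rw [hvzero b i' (fun hcon => hbne hcon.symm), mul_zero]
        · intro habs
          exact absurd (Finset.mem_univ i') habs
      have hdval : d i'.1 = l i'.1 - ∑ i : {i : Fin N // i ∈ I}, l i.1 * v i i'.1 := rfl
      rw [hdval, hsum, sub_self]
    have hdrel : ∀ k, ∑ j, d j * (a j k : ℚ) = 0 := by
      intro k
      simp only [hd, sub_mul, Finset.sum_sub_distrib]
      rw [hl k]
      have hcomm : ∑ j, (∑ i : {i : Fin N // i ∈ I}, l i.1 * v i j) * (a j k : ℚ)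
          = ∑ i : {i : Fin N // i ∈ I}, l i.1 * (∑ j, v i j * (a j k : ℚ)) := by
        simp_rw [Finset.sum_mul]
        rw [Finset.sum_comm]
        simp_rw [mul_assoc, ← Finset.mul_sum]
      rw [hcomm]
      simp_rw [hvrel]
      simp
    have hdC : ∀ j : {j : Fin N // j ∉ I}, d j.1 = 0 := by
      have hg : ∑ j : {j : Fin N // j ∉ I}, d j.1 • (fun k => ((a j.1 k : ℚ))) = 0 := by
        funext k
        simp only [Finset.sum_apply, Pi.smul_apply, smul_eq_mul, Pi.zero_apply]
        have h1 : ∑ j ∈ Iᶜ, d j * (a j k : ℚ)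
            = ∑ j : {j : Fin N // j ∉ I}, d j.1 * (a j.1 k : ℚ) :=
          Finset.sum_subtype Iᶜ (fun x => Finset.mem_compl) _
        have h2 : ∑ j ∈ I, d j * (a j k : ℚ) = 0 :=
          Finset.sum_eq_zero (fun j hj => by rw [hdI ⟨j, hj⟩, zero_mul])
        have h3 := Finset.sum_add_sum_compl I (fun j => d j * (a j k : ℚ))
        rw [hdrel k, h2, zero_add] at h3
        rw [← h1, h3]
      exact fun j => Fintype.linearIndependent_iff.1 hindQ (fun j => d j.1) hg j
    intro j
    by_cases hj : j ∈ I
    · have := hdI ⟨j, hj⟩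
      simpa [hd, sub_eq_zero] using this
    · have := hdC ⟨j, hj⟩
      simpa [hd, sub_eq_zero] using this
  -- lattice facts
  have hlatQ : ∀ x : Fin N → ℤ, x ∈ latticeL a → ∀ k, ∑ j, (x j : ℚ) * (a j k : ℚ) = 0 := by
    intro x hx k
    have hxk := congrFun hx k
    simp only [Finset.sum_apply, Pi.smul_apply, Pi.zero_apply, smul_eq_mul] at hxk
    exact_mod_cast congrArg (fun z : ℤ => (z : ℚ)) hxk
  have hsum0 : ∀ x : Fin N → ℤ, x ∈ latticeL a → ∑ j, x j = 0 := by
    intro x hx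
    have h1 : h (∑ j, x j • a j) = 0 := by rw [hx]; exact map_zero h
    rw [map_sum] at h1
    simp_rw [map_smul, hh, smul_eq_mul, mul_one] at h1
    exact h1
  -- the linear forms lam i and their positivity
  set lam : {i : Fin N // i ∈ I} → ℝ := fun i => ∑ j, ρ j * ((v i j : ℚ) : ℝ) with hlamdef
  have hlam : ∀ i, 0 < lam i := by
    intro i
    set dq : ℕ := ∏ j, (v i j).den with hdq
    have hdpos : 0 < dq := Finset.prod_pos (fun j _ => (v i j).pos)
    have hint : ∀ j, ∃ z : ℤ, (z : ℚ) = (dq : ℚ) * v i j := by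
      intro j
      obtain ⟨mq, hmq⟩ := Finset.dvd_prod_of_mem (fun j => (v i j).den) (Finset.mem_univ j)
      refine ⟨(v i j).num * mq, ?_⟩
      have hden0 : ((v i j).den : ℚ) ≠ 0 := Nat.cast_ne_zero.2 (v i j).den_nz
      have hnum : ((v i j).num : ℚ) = v i j * ((v i j).den : ℚ) :=
        (div_eq_iff hden0).1 (Rat.num_div_den (v i j))
      rw [← hdq] at hmq
      rw [hmq]
      push_cast
      rw [hnum]
      ring
    choose w hw using hint
    have hwR : ∀ j, ((w j : ℝ)) = (dq : ℝ) * ((v i j : ℚ) : ℝ) := by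
      intro j
      have := congrArg (fun q : ℚ => (q : ℝ)) (hw j)
      push_cast at this
      exact this
    have hwlat : w ∈ latticeL a := by
      show ∑ j, w j • a j = 0
      funext k
      have hq : ∑ j, (w j : ℚ) * (a j k : ℚ) = 0 := by
        simp_rw [hw, mul_assoc]
        rw [← Finset.mul_sum, hvrel i k, mul_zero]
      have hz : ((∑ j, w j * a j k : ℤ) : ℚ) = 0 := by push_cast; exact hq
      have hz2 : (∑ j, w j * a j k : ℤ) = 0 := by exact_mod_cast hz
      simpa [Finset.sum_apply, Pi.smul_apply, smul_eq_mul] using hz2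
    have hwi : w i.1 = (dq : ℤ) := by
      have : ((w i.1 : ℚ)) = (dq : ℚ) := by rw [hw, hvone, mul_one]
      exact_mod_cast this
    have hwne : w ≠ 0 := by
      intro h0
      rw [h0] at hwi
      simp only [Pi.zero_apply] at hwi
      omega
    have hwI : ∀ i' ∈ I, 0 ≤ w i' := by
      intro i' hi'
      by_cases hii : (⟨i', hi'⟩ : {i : Fin N // i ∈ I}) = i
      · have he : i' = i.1 := congrArg Subtype.val hii
        rw [he, hwi]
        positivity
      · have hq0 : ((w i' : ℚ)) = 0 := by
          rw [hw, hvzero i ⟨i', hi'⟩ hii, mul_zero]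
        have : w i' = 0 := by exact_mod_cast hq0
        omega
    have hpos := hρ w hwlat hwne hwI
    have heq2 : ∑ j, ρ j * ((w j : ℤ) : ℝ) = (dq : ℝ) * lam i := by
      rw [hlamdef, Finset.mul_sum]
      apply Finset.sum_congr rfl
      intro j _
      rw [hwR j]
      ring
    rw [heq2] at hpos
    have hdR : (0 : ℝ) < (dq : ℝ) := by exact_mod_cast hdpos
    nlinarith [hpos, hdR]
  -- Gamma bound constants
  choose C hC1 hCb using fun j : Fin N => Stmt4Aux.gamma_inv_bound (γ j + 1)
  haveI : Nonempty (Fin N) := ⟨⟨0, hN0⟩⟩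
  set CM : ℝ := Finset.univ.sup' Finset.univ_nonempty C with hCMdef
  have hCMj : ∀ j, C j ≤ CM := fun j => Finset.le_sup' C (Finset.mem_univ j)
  have hCM1 : (1 : ℝ) ≤ CM := (hC1 ⟨0, hN0⟩).trans (hCMj _)
  set Brp : ℝ := CM * 2 ^ N with hBrpdef
  have h2N : (1 : ℝ) ≤ 2 ^ N := one_le_pow₀ one_le_two
  have hBrp1 : (1 : ℝ) ≤ Brp := by rw [hBrpdef]; nlinarith
  have hBrp0 : (0 : ℝ) < Brp := lt_of_lt_of_le one_pos hBrp1
  -- product bound for the Gamma factors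
  have hgamprod : ∀ x : Fin N → ℤ, x ∈ latticeL a →
      ∏ j, ‖(Complex.Gamma ((x j : ℂ) + γ j + 1))⁻¹‖
        ≤ CM ^ N * Brp ^ (∑ j, (x j).natAbs) := by
    intro x hx
    have hb : ∀ j, ‖(Complex.Gamma ((x j : ℂ) + γ j + 1))⁻¹‖
        ≤ C j ^ ((x j).natAbs + 1) * ((-(x j)).toNat.factorial : ℝ)
          / ((x j).toNat.factorial : ℝ) := by
      intro j
      have hbj := hCb j (x j)
      rw [show ((x j : ℂ) + (γ j + 1)) = ((x j : ℂ) + γ j + 1) by ring] at hbj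
      exact hbj
    have hdenpos : (0:ℝ) < ∏ j, ((x j).toNat.factorial : ℝ) :=
      Finset.prod_pos (fun j _ => by exact_mod_cast (x j).toNat.factorial_pos)
    calc ∏ j, ‖(Complex.Gamma ((x j : ℂ) + γ j + 1))⁻¹‖
        ≤ ∏ j, (C j ^ ((x j).natAbs + 1) * ((-(x j)).toNat.factorial : ℝ)
            / ((x j).toNat.factorial : ℝ)) :=
          Finset.prod_le_prod (fun j _ => norm_nonneg _) (fun j _ => hb j)
    _ = (∏ j, C j ^ ((x j).natAbs + 1)) * (∏ j, ((-(x j)).toNat.factorial : ℝ))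
          * (∏ j, ((x j).toNat.factorial : ℝ))⁻¹ := by
        simp_rw [div_eq_mul_inv]
        rw [Finset.prod_mul_distrib, Finset.prod_mul_distrib, Finset.prod_inv_distrib]
    _ ≤ (∏ j, CM ^ ((x j).natAbs + 1)) * (∏ j, ((-(x j)).toNat.factorial : ℝ))
          * (∏ j, ((x j).toNat.factorial : ℝ))⁻¹ := by
        gcongr ?_ * ?_ * ?_
        · apply Finset.prod_le_prod (fun j _ => pow_nonneg (le_trans zero_le_one (hC1 j)) _)
          intro j _
          exact pow_le_pow_left₀ (le_trans zero_le_one (hC1 j)) (hCMj j) _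
    _ ≤ (∏ j, CM ^ ((x j).natAbs + 1)) * ((2:ℝ) ^ (N * ∑ j, (x j).natAbs)
          * ∏ j, ((x j).toNat.factorial : ℝ)) * (∏ j, ((x j).toNat.factorial : ℝ))⁻¹ := by
        gcongr (?_ : ℝ) * ?_ * ?_
        · exact Stmt4Aux.fact_ratio x (hsum0 x hx)
    _ = CM ^ N * Brp ^ (∑ j, (x j).natAbs) := by
        have hS : ∑ i, ((x i).natAbs + 1) = (∑ j, (x j).natAbs) + N := by
          rw [Finset.sum_add_distrib, Finset.sum_const, Finset.card_univ, Fintype.card_fin,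
            smul_eq_mul, mul_one]
        rw [Finset.prod_pow_eq_pow_sum, hS, pow_add, pow_mul, hBrpdef, mul_pow]
        field_simp
  -- bound on the coefficients v
  set VM : ℝ := 1 + ∑ i : {i : Fin N // i ∈ I}, ∑ j, |((v i j : ℚ) : ℝ)| with hVMdef
  have hVM1 : (1 : ℝ) ≤ VM := by
    rw [hVMdef]
    have : (0:ℝ) ≤ ∑ i : {i : Fin N // i ∈ I}, ∑ j, |((v i j : ℚ) : ℝ)| :=
      Finset.sum_nonneg (fun i _ => Finset.sum_nonneg (fun j _ => abs_nonneg _))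
    linarith
  have hVabs : ∀ (i : {i : Fin N // i ∈ I}) j, |((v i j : ℚ) : ℝ)| ≤ VM := by
    intro i j
    have h1 : |((v i j : ℚ) : ℝ)| ≤ ∑ j', |((v i j' : ℚ) : ℝ)| :=
      Finset.single_le_sum (f := fun j' => |((v i j' : ℚ) : ℝ)|)
        (fun _ _ => abs_nonneg _) (Finset.mem_univ j)
    have h2 : ∑ j', |((v i j' : ℚ) : ℝ)|
        ≤ ∑ i' : {i : Fin N // i ∈ I}, ∑ j', |((v i' j' : ℚ) : ℝ)| :=
      Finset.single_le_sum (f := fun i' => ∑ j', |((v i' j' : ℚ) : ℝ)|)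
        (fun _ _ => Finset.sum_nonneg (fun _ _ => abs_nonneg _)) (Finset.mem_univ i)
    rw [hVMdef]
    linarith
  -- real representation of lattice vectors
  have hrepR : ∀ x : Fin N → ℤ, x ∈ latticeL a → ∀ j,
      ((x j : ℝ)) = ∑ i : {i : Fin N // i ∈ I}, (x i.1 : ℝ) * ((v i j : ℚ) : ℝ) := by
    intro x hx j
    have h1 := hrep (fun j => ((x j : ℚ))) (hlatQ x hx) j
    have h2 := congrArg (fun q : ℚ => (q : ℝ)) h1
    push_cast at h2
    exact h2
  have hrhosum : ∀ x : Fin N → ℤ, x ∈ latticeL a →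
      ∑ j, ρ j * (x j : ℝ) = ∑ i : {i : Fin N // i ∈ I}, lam i * (x i.1 : ℝ) := by
    intro x hx
    calc ∑ j, ρ j * (x j : ℝ)
        = ∑ j, ∑ i : {i : Fin N // i ∈ I}, ρ j * ((x i.1 : ℝ) * ((v i j : ℚ) : ℝ)) := by
          apply Finset.sum_congr rfl
          intro j _
          rw [hrepR x hx j, Finset.mul_sum]
    _ = ∑ i : {i : Fin N // i ∈ I}, ∑ j, ρ j * ((x i.1 : ℝ) * ((v i j : ℚ) : ℝ)) :=
          Finset.sum_comm
    _ = ∑ i : {i : Fin N // i ∈ I}, lam i * (x i.1 : ℝ) := by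
          apply Finset.sum_congr rfl
          intro i _
          rw [hlamdef]
          rw [Finset.sum_mul]
          apply Finset.sum_congr rfl
          intro j _
          ring
  -- ℓ¹ bound via the I-coordinates
  have habsbound : ∀ x : Fin N → ℤ, x ∈ latticeL a →
      ((∑ j, (x j).natAbs : ℕ) : ℝ)
        ≤ (N * VM) * ∑ i : {i : Fin N // i ∈ I}, |(x i.1 : ℝ)| := by
    intro x hx
    have h0 : ((∑ j, (x j).natAbs : ℕ) : ℝ) = ∑ j, |(x j : ℝ)| := by
      push_cast [Nat.cast_natAbs]
      rfl
    rw [h0]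
    have hj : ∀ j, |(x j : ℝ)| ≤ ∑ i : {i : Fin N // i ∈ I}, |(x i.1 : ℝ)| * VM := by
      intro j
      rw [hrepR x hx j]
      calc |∑ i : {i : Fin N // i ∈ I}, (x i.1 : ℝ) * ((v i j : ℚ) : ℝ)|
          ≤ ∑ i : {i : Fin N // i ∈ I}, |(x i.1 : ℝ) * ((v i j : ℚ) : ℝ)| :=
            Finset.abs_sum_le_sum_abs _ _
      _ ≤ ∑ i : {i : Fin N // i ∈ I}, |(x i.1 : ℝ)| * VM := by
            apply Finset.sum_le_sum
            intro i _
            rw [abs_mul]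
            exact mul_le_mul_of_nonneg_left (hVabs i j) (abs_nonneg _)
    calc ∑ j, |(x j : ℝ)|
        ≤ ∑ _j : Fin N, (∑ i : {i : Fin N // i ∈ I}, |(x i.1 : ℝ)| * VM) :=
          Finset.sum_le_sum (fun j _ => hj j)
    _ = N * (∑ i : {i : Fin N // i ∈ I}, |(x i.1 : ℝ)| * VM) := by
          rw [Finset.sum_const, Finset.card_univ, Fintype.card_fin, nsmul_eq_mul]
    _ = (N * VM) * ∑ i : {i : Fin N // i ∈ I}, |(x i.1 : ℝ)| := by
          rw [← Finset.sum_mul]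
          ring
  -- choice of t₀
  set EE : ℝ := N * VM with hEEdef
  have hEE0 : (0:ℝ) ≤ EE := by
    rw [hEEdef]
    exact mul_nonneg (Nat.cast_nonneg N) (by linarith)
  set Q : ℝ := Brp ^ EE with hQdef
  have hQ0 : (0:ℝ) < Q := Real.rpow_pos_of_pos hBrp0 _
  set tbase : {i : Fin N // i ∈ I} → ℝ := fun i => (1 / (2 * Q)) ^ (lam i)⁻¹ with htbdef
  refine ⟨min (1/2) (Finset.univ.inf' Finset.univ_nonempty tbase), ?_, ?_⟩
  · apply lt_min (by norm_num)
    rw [Finset.lt_inf'_iff]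
    intro i _
    exact Real.rpow_pos_of_pos (by positivity) _
  intro t ht0 htlt
  have htq : ∀ i, t ^ lam i * Q ≤ 1/2 := by
    intro i
    have h1 : t < tbase i :=
      lt_of_lt_of_le htlt (le_trans (min_le_right _ _) (Finset.inf'_le _ (Finset.mem_univ i)))
    have h2 : t ^ lam i ≤ (tbase i) ^ lam i :=
      Real.rpow_le_rpow (le_of_lt ht0) h1.le (hlam i).le
    have h3 : (tbase i) ^ lam i = 1 / (2 * Q) := by
      rw [htbdef]
      rw [← Real.rpow_mul (by positivity : (0:ℝ) ≤ 1/(2*Q)), inv_mul_cancel₀ (ne_of_gt (hlam i)),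
        Real.rpow_one]
    calc t ^ lam i * Q ≤ (1/(2*Q)) * Q := by
          apply mul_le_mul_of_nonneg_right _ hQ0.le
          rw [← h3]; exact h2
    _ = 1/2 := by field_simp
  have htq0 : ∀ i, (0:ℝ) ≤ t ^ lam i * Q :=
    fun i => mul_nonneg (Real.rpow_nonneg ht0.le _) hQ0.le
  -- the support set
  set T : Set (latticeL a) :=
    {x : latticeL a | ∀ i : {i : Fin N // i ∈ I}, 0 ≤ (x : Fin N → ℤ) i.1 + c i} with hTdef
  have hvanish : ∀ x : latticeL a, x ∉ T →
      (∏ j, t ^ (ρ j * ((x : Fin N → ℤ) j : ℝ)) *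
        ‖(Complex.Gamma (((x : Fin N → ℤ) j : ℂ) + γ j + 1))⁻¹‖) = 0 := by
    intro x hx
    simp only [hTdef, Set.mem_setOf_eq, not_forall, not_le] at hx
    obtain ⟨i, hi⟩ := hx
    apply Finset.prod_eq_zero (Finset.mem_univ i.1)
    have hgz : Complex.Gamma (((x : Fin N → ℤ) i.1 : ℂ) + γ i.1 + 1) = 0 := by
      rw [hc i]
      have harg : ((x : Fin N → ℤ) i.1 : ℂ) + (c i : ℂ) + 1
          = -(((-((x : Fin N → ℤ) i.1 + c i + 1)).toNat : ℕ) : ℂ) := by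
        have h5 : ((-((x : Fin N → ℤ) i.1 + c i + 1)).toNat : ℤ)
            = -((x : Fin N → ℤ) i.1 + c i + 1) := Int.toNat_of_nonneg (by omega)
        have h6 := congrArg (fun z : ℤ => (z : ℂ)) h5
        push_cast at h6 ⊢
        linear_combination h6
      rw [harg]
      exact (Complex.Gamma_eq_zero_iff _).2 ⟨_, rfl⟩
    rw [hgz]
    simp
  -- the injection into (I → ℕ)
  set Ψ : T → ({i : Fin N // i ∈ I} → ℕ) :=
    fun x i => ((x.1 : Fin N → ℤ) i.1 + c i).toNat with hΨdef
  have hΨinj : Function.Injective Ψ := by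
    intro x y hxy
    have hagree : ∀ i : {i : Fin N // i ∈ I},
        (x.1 : Fin N → ℤ) i.1 = (y.1 : Fin N → ℤ) i.1 := by
      intro i
      have h1 := congrFun hxy i
      simp only [hΨdef] at h1
      have hx2 := x.2 i
      have hy2 := y.2 i
      omega
    apply Subtype.ext
    apply Subtype.ext
    funext j
    have h1 := hrep (fun j => (((x.1 : Fin N → ℤ) j : ℚ))) (hlatQ _ x.1.2) j
    have h2 := hrep (fun j => (((y.1 : Fin N → ℤ) j : ℚ))) (hlatQ _ y.1.2) j
    have h3 : (((x.1 : Fin N → ℤ) j : ℚ)) = (((y.1 : Fin N → ℤ) j : ℚ)) := by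
      rw [h1, h2]
      apply Finset.sum_congr rfl
      intro i _
      rw [hagree i]
    exact_mod_cast h3
  -- constants of the majorant
  set K2 : ℝ := ∑ i : {i : Fin N // i ∈ I}, lam i * (c i : ℝ) with hK2def
  set K1 : ℝ := EE * ∑ i : {i : Fin N // i ∈ I}, |(c i : ℝ)| with hK1def
  set KK : ℝ := t ^ (-K2) * (CM ^ N * Brp ^ K1) with hKKdef
  -- the majorant bound
  have hmajor : ∀ x : T,
      (∏ j, t ^ (ρ j * ((x.1 : Fin N → ℤ) j : ℝ)) *
        ‖(Complex.Gamma (((x.1 : Fin N → ℤ) j : ℂ) + γ j + 1))⁻¹‖)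
      ≤ KK * ∏ i : {i : Fin N // i ∈ I}, (t ^ lam i * Q) ^ (Ψ x i) := by
    intro x
    set l : Fin N → ℤ := (x.1 : Fin N → ℤ) with hldef
    have hxL : l ∈ latticeL a := x.1.2
    have hm : ∀ i : {i : Fin N // i ∈ I}, ((Ψ x i : ℤ)) = l i.1 + c i := by
      intro i
      simp only [hΨdef]
      exact Int.toNat_of_nonneg (x.2 i)
    have hmR : ∀ i : {i : Fin N // i ∈ I}, ((l i.1 : ℝ)) = (Ψ x i : ℝ) - (c i : ℝ) := by
      intro i
      have := congrArg (fun z : ℤ => (z : ℝ)) (hm i)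
      push_cast at this
      linarith
    rw [Finset.prod_mul_distrib]
    have hA : ∏ j, t ^ (ρ j * (l j : ℝ))
        = t ^ (-K2) * ∏ i : {i : Fin N // i ∈ I}, (t ^ lam i) ^ (Ψ x i) := by
      rw [← Real.rpow_sum_of_pos ht0]
      rw [hrhosum l hxL]
      have hsplit : ∑ i : {i : Fin N // i ∈ I}, lam i * (l i.1 : ℝ)
          = (∑ i : {i : Fin N // i ∈ I}, lam i * (Ψ x i : ℝ)) + (-K2) := by
        rw [hK2def, ← Finset.sum_neg_distrib, ← Finset.sum_add_distrib]
        apply Finset.sum_congr rfl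
        intro i _
        rw [hmR i]
        ring
      rw [hsplit, Real.rpow_add ht0, mul_comm]
      congr 1
      rw [Real.rpow_sum_of_pos ht0]
      apply Finset.prod_congr rfl
      intro i _
      rw [Real.rpow_mul ht0.le, Real.rpow_natCast]
    rw [hA]
    have hG : ∏ j, ‖(Complex.Gamma ((l j : ℂ) + γ j + 1))⁻¹‖
        ≤ (CM ^ N * Brp ^ K1) * ∏ i : {i : Fin N // i ∈ I}, Q ^ (Ψ x i) := by
      refine le_trans (hgamprod l hxL) ?_
      have hexp : ((∑ j, (l j).natAbs : ℕ) : ℝ)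
          ≤ (∑ i : {i : Fin N // i ∈ I}, EE * (Ψ x i : ℝ)) + K1 := by
        refine le_trans (habsbound l hxL) ?_
        have hsum : ∑ i : {i : Fin N // i ∈ I}, |(l i.1 : ℝ)|
            ≤ (∑ i : {i : Fin N // i ∈ I}, (Ψ x i : ℝ))
              + ∑ i : {i : Fin N // i ∈ I}, |(c i : ℝ)| := by
          rw [← Finset.sum_add_distrib]
          apply Finset.sum_le_sum
          intro i _
          rw [hmR i]
          calc |(Ψ x i : ℝ) - (c i : ℝ)| ≤ |(Ψ x i : ℝ)| + |(c i : ℝ)| := abs_sub _ _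
          _ = (Ψ x i : ℝ) + |(c i : ℝ)| := by rw [abs_of_nonneg (Nat.cast_nonneg _)]
        calc (N * VM) * ∑ i : {i : Fin N // i ∈ I}, |(l i.1 : ℝ)|
            ≤ (N * VM) * ((∑ i : {i : Fin N // i ∈ I}, (Ψ x i : ℝ))
              + ∑ i : {i : Fin N // i ∈ I}, |(c i : ℝ)|) := by
              apply mul_le_mul_of_nonneg_left hsum
              rw [← hEEdef]
              exact hEE0
        _ = EE * ((∑ i : {i : Fin N // i ∈ I}, (Ψ x i : ℝ))
              + ∑ i : {i : Fin N // i ∈ I}, |(c i : ℝ)|) := by rw [hEEdef]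
        _ = (∑ i : {i : Fin N // i ∈ I}, EE * (Ψ x i : ℝ)) + K1 := by
              rw [hK1def, mul_add, Finset.mul_sum]
      calc CM ^ N * Brp ^ (∑ j, (l j).natAbs)
          = CM ^ N * Brp ^ (((∑ j, (l j).natAbs : ℕ)) : ℝ) := by rw [Real.rpow_natCast]
      _ ≤ CM ^ N * Brp ^ ((∑ i : {i : Fin N // i ∈ I}, EE * (Ψ x i : ℝ)) + K1) := by
            apply mul_le_mul_of_nonneg_left (Real.rpow_le_rpow_of_exponent_le hBrp1 hexp)
            exact pow_nonneg (le_trans zero_le_one hCM1) _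
      _ = (CM ^ N * Brp ^ K1) * ∏ i : {i : Fin N // i ∈ I}, Q ^ (Ψ x i) := by
            rw [Real.rpow_add hBrp0]
            have hrw : Brp ^ (∑ i : {i : Fin N // i ∈ I}, EE * (Ψ x i : ℝ))
                = ∏ i : {i : Fin N // i ∈ I}, Q ^ (Ψ x i) := by
              rw [Real.rpow_sum_of_pos hBrp0]
              apply Finset.prod_congr rfl
              intro i _
              rw [Real.rpow_mul hBrp0.le, Real.rpow_natCast, hQdef]
            rw [hrw]
            ring
    calc (t ^ (-K2) * ∏ i : {i : Fin N // i ∈ I}, (t ^ lam i) ^ (Ψ x i))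
          * ∏ j, ‖(Complex.Gamma ((l j : ℂ) + γ j + 1))⁻¹‖
        ≤ (t ^ (-K2) * ∏ i : {i : Fin N // i ∈ I}, (t ^ lam i) ^ (Ψ x i))
          * ((CM ^ N * Brp ^ K1) * ∏ i : {i : Fin N // i ∈ I}, Q ^ (Ψ x i)) := by
          apply mul_le_mul_of_nonneg_left hG
          apply mul_nonneg (Real.rpow_nonneg ht0.le _)
          exact Finset.prod_nonneg
            (fun i _ => pow_nonneg (Real.rpow_nonneg ht0.le _) _)
    _ = KK * ∏ i : {i : Fin N // i ∈ I}, ((t ^ lam i) ^ (Ψ x i) * Q ^ (Ψ x i)) := by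
          rw [hKKdef, Finset.prod_mul_distrib]
          ring
    _ = KK * ∏ i : {i : Fin N // i ∈ I}, (t ^ lam i * Q) ^ (Ψ x i) := by
          congr 1
          apply Finset.prod_congr rfl
          intro i _
          rw [mul_pow]
  -- conclusion
  have hsummaj : Summable (fun m : {i : Fin N // i ∈ I} → ℕ =>
      KK * ∏ i, (t ^ lam i * Q) ^ m i) :=
    (Stmt4Aux.summable_pi_geom _ htq0
      (fun i => lt_of_le_of_lt (htq i) (by norm_num))).mul_left KK
  have hcomp := hsummaj.comp_injective hΨinj
  have hTsum : Summable (fun x : T =>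
      ∏ j, t ^ (ρ j * ((x.1 : Fin N → ℤ) j : ℝ)) *
        ‖(Complex.Gamma (((x.1 : Fin N → ℤ) j : ℂ) + γ j + 1))⁻¹‖) := by
    apply Summable.of_nonneg_of_le _ hmajor hcomp
    intro x
    apply Finset.prod_nonneg
    intro j _
    exact mul_nonneg (Real.rpow_nonneg ht0.le _) (norm_nonneg _)
  have hsupp : Function.support (fun x : latticeL a =>
      ∏ j, t ^ (ρ j * ((x : Fin N → ℤ) j : ℝ)) *
        ‖(Complex.Gamma (((x : Fin N → ℤ) j : ℂ) + γ j + 1))⁻¹‖) ⊆ T := by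
    intro x hx
    by_contra hxT
    exact hx (hvanish x hxT)
  have hindic := (summable_subtype_iff_indicator (s := T)
      (f := fun x : latticeL a =>
        ∏ j, t ^ (ρ j * ((x : Fin N → ℤ) j : ℝ)) *
          ‖(Complex.Gamma (((x : Fin N → ℤ) j : ℂ) + γ j + 1))⁻¹‖)).1 hTsum
  rwa [Set.indicator_eq_self.2 hsupp] at hindic
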